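/- (Good slits produce good children.) Suppose w ∈ ℝ² with height |w| = w₂ > 0 and irrational inverse slope, and suppose α > 1, β > α. Let w' = w + 2v with v = (p,q) primitive, β|w| ≤ q ≤ 2β|w|, and 1/β < |w × v| < 1/α. Then the inverse slope of w' has a convergent of height q'' satisfying (α − 1/2)|w'| < q'' < β|w'|, and no convergent of height strictly between |w'| and (α−1/2)|w'|. -/

import Mathlib

open GenContFract

/-- continuants of `of v` are integers. -/
lemma of_contsAux_int (v : ℝ) :
    ∀ n, (∃ a b : ℤ, ((GenContFract.of v).contsAux n).a = (a : ℝ) ∧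
      ((GenContFract.of v).contsAux n).b = (b : ℝ)) ∧
      (∃ a b : ℤ, ((GenContFract.of v).contsAux (n+1)).a = (a : ℝ) ∧
      ((GenContFract.of v).contsAux (n+1)).b = (b : ℝ)) := by
  intro n
  induction n with
  | zero =>
    refine ⟨⟨1, 0, by simp [zeroth_contAux_eq_one_zero]⟩, ⟨⌊v⌋, 1, ?_⟩⟩
    rw [first_contAux_eq_h_one, of_h_eq_floor]
    simp
  | succ n ih =>
    refine ⟨ih.2, ?_⟩
    obtain ⟨⟨a₀, b₀, ha₀, hb₀⟩, ⟨a₁, b₁, ha₁, hb₁⟩⟩ := ih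
    rcases h : (GenContFract.of v).s.get? n with _ | gp
    · rw [contsAux_stable_step_of_terminated h]
      exact ⟨a₁, b₁, ha₁, hb₁⟩
    · have ha1 : gp.a = 1 := of_partNum_eq_one (partNum_eq_s_a h)
      obtain ⟨ifp, _, hifp⟩ :=
        IntFractPair.exists_succ_get?_stream_of_gcf_of_get?_eq_some h
      rw [contsAux_recurrence h rfl rfl]
      exact ⟨ifp.b * a₁ + a₀, ifp.b * b₁ + b₀, by push_cast [ha1, ← hifp, ha₀, ha₁]; ring,
        by push_cast [ha1, ← hifp, hb₀, hb₁]; ring⟩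

lemma of_dens_eq_of_convs_eq (v : ℝ) {n : ℕ}
    (hnt : ¬(GenContFract.of v).TerminatedAt n) (p : ℤ) (q : ℕ) (hq : 0 < q)
    (hcop : Int.gcd p (q : ℤ) = 1)
    (hc : (GenContFract.of v).convs n = (p : ℝ) / (q : ℝ)) :
    (GenContFract.of v).dens n = (q : ℝ) := by
  obtain ⟨⟨pa, pb, hpa, hpb⟩, ⟨a, b, ha, hb⟩⟩ := of_contsAux_int v n
  have hnt' : n = 0 ∨ ¬(GenContFract.of v).TerminatedAt (n - 1) :=
    Or.inr (mt (terminated_stable n.pred_le) hnt)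
  -- dens n > 0
  have hdpos : (0 : ℝ) < (GenContFract.of v).dens n := by
    calc (0:ℝ) < Nat.fib (n+1) := by exact_mod_cast Nat.fib_pos.2 n.succ_pos
    _ ≤ _ := succ_nth_fib_le_of_nth_den (by simpa using hnt')
  have hdens : (GenContFract.of v).dens n = (b : ℝ) := by
    rw [den_eq_conts_b, nth_cont_eq_succ_nth_contAux, hb]
  have hnums : (GenContFract.of v).nums n = (a : ℝ) := by
    rw [num_eq_conts_a, nth_cont_eq_succ_nth_contAux, ha]
  have hbpos : 0 < b := by exact_mod_cast hdens ▸ hdpos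
  -- determinant
  have hdet : ((GenContFract.of v).contsAux n).a * ((GenContFract.of v).contsAux (n+1)).b -
      ((GenContFract.of v).contsAux n).b * ((GenContFract.of v).contsAux (n+1)).a =
        (-1 : ℝ)^n := by
    cases n with
    | zero => simp [zeroth_contAux_eq_one_zero, first_contAux_eq_h_one]
    | succ k =>
      have := (SimpContFract.of v).determinant (n := k) (mt (terminated_stable k.le_succ) hnt)
      rw [show ((SimpContFract.of v : SimpContFract ℝ) : GenContFract ℝ) = GenContFract.of v
        from rfl] at this
      simp only [num_eq_conts_a, den_eq_conts_b, nth_cont_eq_succ_nth_contAux] at this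
      exact this
  rw [hpa, hpb, ha, hb] at hdet
  have hdet' : pa * b - pb * a = (-1 : ℤ)^n := by exact_mod_cast hdet
  have hgcd : Int.gcd a b = 1 := by
    have h1 : (Int.gcd a b : ℤ) ∣ pa * b - pb * a :=
      dvd_sub (Dvd.dvd.mul_left (Int.gcd_dvd_right a b) pa)
        (Dvd.dvd.mul_left (Int.gcd_dvd_left a b) pb)
    rw [hdet'] at h1
    have h2 : IsUnit ((-1 : ℤ)^n) := (IsUnit.neg isUnit_one).pow n
    have := Int.isUnit_iff.mp (isUnit_of_dvd_unit h1 h2)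
    omega
  -- cross multiply
  have hqpos : (0:ℝ) < (q:ℝ) := by exact_mod_cast hq
  have hcross : (a : ℝ) * q = p * b := by
    have : (a : ℝ) / b = p / q := by
      rw [← hnums, ← hdens, ← conv_eq_num_div_den, hc]
    field_simp at this
    linarith [this]
  have hcross' : a * (q : ℤ) = p * b := by exact_mod_cast hcross
  have hbq : b = (q : ℤ) := by
    have h1 : b ∣ (q : ℤ) := by
      have : b ∣ a * q := hcross' ▸ Dvd.dvd.mul_left dvd_rfl p
      exact (Int.isCoprime_iff_gcd_eq_one.mpr (Int.gcd_comm a b ▸ hgcd)).dvd_of_dvd_mul_left this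
    have h2 : (q : ℤ) ∣ b := by
      have : (q:ℤ) ∣ p * b := hcross' ▸ Dvd.dvd.mul_left dvd_rfl a
      exact (Int.isCoprime_iff_gcd_eq_one.mpr hcop).symm.dvd_of_dvd_mul_left this
    exact Int.dvd_antisymm (le_of_lt hbpos) (by positivity) h1 h2
  rw [hdens, hbq]; simp

lemma abs_sub_convs_gt (v : ℝ) (n : ℕ) (not_terminatedAt_n : ¬(GenContFract.of v).TerminatedAt n) :
    1 / ((GenContFract.of v).dens n *
        ((GenContFract.of v).dens n + (GenContFract.of v).dens (n + 1)))
      < |v - (GenContFract.of v).convs n| := by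
  let g := GenContFract.of v
  let nextConts := g.contsAux (n + 2)
  set conts := contsAux g (n + 1) with conts_eq
  set pred_conts := contsAux g n with pred_conts_eq
  change 1 / (conts.b * (conts.b + nextConts.b)) < |v - convs g n|
  obtain ⟨gp, s_nth_eq⟩ : ∃ gp, g.s.get? n = some gp :=
    Option.ne_none_iff_exists'.1 not_terminatedAt_n
  have gp_a_eq_one : gp.a = 1 := of_partNum_eq_one (partNum_eq_s_a s_nth_eq)
  have nextConts_b_eq : nextConts.b = pred_conts.b + gp.b * conts.b := by
    simp [nextConts, contsAux_recurrence s_nth_eq pred_conts_eq conts_eq, gp_a_eq_one,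
      pred_conts_eq.symm, conts_eq.symm, add_comm]
  obtain ⟨ifp_succ_n, succ_nth_stream_eq, ifp_succ_n_b_eq_gp_b⟩ :
      ∃ ifp_succ_n, IntFractPair.stream v (n + 1) = some ifp_succ_n ∧ (ifp_succ_n.b : ℝ) = gp.b :=
    IntFractPair.exists_succ_get?_stream_of_gcf_of_get?_eq_some s_nth_eq
  obtain ⟨ifp_n, stream_nth_eq, stream_nth_fr_ne_zero, if_of_eq_ifp_succ_n⟩ :
    ∃ ifp_n, IntFractPair.stream v n = some ifp_n ∧ ifp_n.fr ≠ 0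
      ∧ IntFractPair.of ifp_n.fr⁻¹ = ifp_succ_n :=
    IntFractPair.succ_nth_stream_eq_some_iff.1 succ_nth_stream_eq
  let den' := conts.b * (pred_conts.b + ifp_n.fr⁻¹ * conts.b)
  have hvd : v - g.convs n = (-1) ^ n / den' := by
    have tmp := sub_convs_eq stream_nth_eq
    simp only [stream_nth_fr_ne_zero, conts_eq.symm, pred_conts_eq.symm, if_false] at tmp
    rw [tmp]
    ring
  -- positivity facts
  have conts_b_ineq : (Nat.fib (n + 1) : ℝ) ≤ conts.b :=
    haveI : ¬g.TerminatedAt (n - 1) := mt (terminated_stable n.pred_le) not_terminatedAt_n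
    fib_le_of_contsAux_b <| Or.inr this
  have pred_conts_b_nonneg : 0 ≤ pred_conts.b :=
    haveI : (Nat.fib n : ℝ) ≤ pred_conts.b :=
      haveI : ¬g.TerminatedAt (n - 2) :=
        mt (terminated_stable (n.sub_le 2)) not_terminatedAt_n
      fib_le_of_contsAux_b <| Or.inr this
    le_trans (by exact_mod_cast (Nat.fib n).zero_le) this
  have zero_lt_conts_b : 0 < conts.b :=
    conts_b_ineq.trans_lt' <| by exact_mod_cast Nat.fib_pos.2 n.succ_pos
  have zero_lt_fr_inv : 0 < ifp_n.fr⁻¹ :=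
    haveI zero_le_ifp_n_fract : 0 ≤ ifp_n.fr :=
      IntFractPair.nth_stream_fr_nonneg stream_nth_eq
    inv_pos.2 (lt_of_le_of_ne zero_le_ifp_n_fract stream_nth_fr_ne_zero.symm)
  have den'_pos : 0 < den' := by positivity
  -- |v - convs| = 1/den'
  have habs : |v - g.convs n| = 1 / den' := by
    rw [hvd, abs_div, abs_neg_one_pow n, abs_of_pos den'_pos]
  rw [habs]
  -- key strict inequality: fr⁻¹ < gp.b + 1
  have hfloor : (ifp_succ_n.b : ℝ) = (⌊ifp_n.fr⁻¹⌋ : ℝ) := by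
    rw [← if_of_eq_ifp_succ_n]; rfl
  have hlt : ifp_n.fr⁻¹ < gp.b + 1 := by
    rw [← ifp_succ_n_b_eq_gp_b, hfloor]
    exact Int.lt_floor_add_one _
  have hden : den' < conts.b * (conts.b + nextConts.b) := by
    rw [nextConts_b_eq]
    have : pred_conts.b + ifp_n.fr⁻¹ * conts.b <
        conts.b + (pred_conts.b + gp.b * conts.b) := by
      nlinarith
    exact mul_lt_mul_of_pos_left this zero_lt_conts_b
  exact one_div_lt_one_div_of_lt den'_pos hden

/-- Good slits produce good children: if `w` is a slit with irrational inverse slope and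
`w' = w + 2v` with `v = (p,q)` primitive, `β|w| ≤ q ≤ 2β|w|`, `1/β < |w × v| < 1/α`, then
the inverse slope of `w'` has a convergent of height `q''` with `(α−1/2)|w'| < q'' < β|w'|`,
and no convergent of height strictly between `|w'|` and `(α−1/2)|w'|`. -/
theorem good_children
    (w : ℝ × ℝ) (hw : 0 < w.2) (hirr : Irrational (w.1 / w.2))
    (p : ℤ) (q : ℕ) (hq : 0 < q) (hcop : Int.gcd p (q : ℤ) = 1)
    (α β : ℝ) (hα : 1 < α) (hαβ : α < β)
    (hq1 : β * w.2 ≤ (q : ℝ)) (hq2 : (q : ℝ) ≤ 2 * β * w.2)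
    (hx1 : 1 / β < |w.1 * (q : ℝ) - w.2 * (p : ℝ)|)
    (hx2 : |w.1 * (q : ℝ) - w.2 * (p : ℝ)| < 1 / α)
    (w' : ℝ × ℝ) (hw' : w' = (w.1 + 2 * (p : ℝ), w.2 + 2 * (q : ℝ))) :
    (∃ k : ℕ, (α - 1 / 2) * w'.2 < (GenContFract.of (w'.1 / w'.2)).dens k ∧
        (GenContFract.of (w'.1 / w'.2)).dens k < β * w'.2) ∧
    (∀ k : ℕ, ¬ (w'.2 < (GenContFract.of (w'.1 / w'.2)).dens k ∧
        (GenContFract.of (w'.1 / w'.2)).dens k < (α - 1 / 2) * w'.2)) := by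
  subst hw'
  dsimp only
  set W : ℝ := w.2 + 2 * q with hWdef
  set ξ : ℝ := (w.1 + 2 * p) / W with hξdef
  set c : ℝ := |w.1 * (q : ℝ) - w.2 * (p : ℝ)| with hcdef
  have hα0 : (0:ℝ) < α := by linarith
  have hβ0 : (0:ℝ) < β := by linarith
  have hq1' : (1:ℝ) ≤ (q:ℝ) := by exact_mod_cast hq
  have hqpos : (0:ℝ) < (q:ℝ) := by linarith
  have hW : 0 < W := by positivity
  have h2q : 2 * (q:ℝ) < W := by rw [hWdef]; linarith
  have hc0 : 0 < c := lt_trans (by positivity) hx1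
  have hc1 : c < 1 := lt_trans hx2 (by rw [div_lt_one hα0]; linarith)
  have habs : |ξ - (p:ℝ)/(q:ℝ)| = c / (W * q) := by
    have hdiff : ξ - (p:ℝ)/(q:ℝ) = (w.1 * q - w.2 * p) / (W * q) := by
      rw [hξdef, hWdef]
      field_simp
      ring
    rw [hdiff, abs_div, abs_of_pos (by positivity : (0:ℝ) < W * q), hcdef]
  -- the rational p/q
  have hcp : p.natAbs.Coprime q := by
    rwa [Int.gcd, Int.natAbs_natCast] at hcop
  set r : ℚ := Rat.mk' p q hq.ne' hcp with hrdef
  have hrden : r.den = q := rfl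
  have hrnum : r.num = p := rfl
  have hr : (r : ℝ) = (p:ℝ)/(q:ℝ) := by
    rw [Rat.cast_def, hrden, hrnum]
  -- Legendre
  obtain ⟨n, hn⟩ : ∃ n, (GenContFract.of ξ).convs n = (r : ℝ) := by
    apply Real.exists_convs_eq_rat
    rw [hr, habs, hrden]
    rw [div_lt_div_iff₀ (by positivity) (by positivity)]
    push_cast
    nlinarith
  rw [hr] at hn
  have hnt : ¬(GenContFract.of ξ).TerminatedAt n := by
    intro ht
    have := of_correctness_of_terminatedAt ht
    rw [hn] at this
    have : |ξ - (p:ℝ)/(q:ℝ)| = 0 := by rw [this]; simp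
    rw [habs] at this
    have : c = 0 := by
      field_simp at this
      simpa using this
    linarith
  have hdq : (GenContFract.of ξ).dens n = (q : ℝ) :=
    of_dens_eq_of_convs_eq ξ hnt p q hq hcop hn
  set D : ℝ := (GenContFract.of ξ).dens (n+1) with hDdef
  have hqD : (q:ℝ) ≤ D := hdq ▸ of_den_mono
  have hDpos : 0 < D := by linarith
  -- upper bound: c * D ≤ W
  have hub := abs_sub_convs_le (v := ξ) hnt
  rw [hn, habs, hdq, ← hDdef] at hub
  have hcDW : c * D ≤ W := by
    rw [div_le_div_iff₀ (by positivity) (by positivity)] at hub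
    nlinarith [hub, hqpos]
  -- lower bound: α * W < q + D
  have hlb := abs_sub_convs_gt ξ n hnt
  rw [hn, habs, hdq, ← hDdef] at hlb
  have hαWqD : α * W < (q:ℝ) + D := by
    rw [div_lt_div_iff₀ (by positivity) (by positivity)] at hlb
    have h1 : W < c * ((q:ℝ) + D) := by nlinarith [hlb, hqpos]
    have h2 : c * ((q:ℝ) + D) < (1/α) * ((q:ℝ) + D) := by
      apply mul_lt_mul_of_pos_right hx2
      positivity
    have h2' : (1/α) * ((q:ℝ) + D) = ((q:ℝ) + D) / α := by ring
    have h3 : W < ((q:ℝ) + D) / α := by linarith [h2' ▸ h2]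
    have h4 := (lt_div_iff₀ hα0).mp h3
    linarith
  have hDup : D < β * W := by
    have h5 : D * (1/β) < D * c := mul_lt_mul_of_pos_left hx1 hDpos
    have h6 : D / β < W := by
      have : D * (1/β) = D / β := by ring
      linarith [this ▸ h5, hcDW]
    have := (div_lt_iff₀ hβ0).mp h6
    linarith
  have hDlo : (α - 1/2) * W < D := by
    rw [hWdef] at hαWqD ⊢
    linarith
  have hmono : Monotone (GenContFract.of ξ).dens :=
    monotone_nat_of_le_succ fun m => of_den_mono
  constructor
  · exact ⟨n + 1, hDlo, hDup⟩
  · rintro k ⟨h1, h2⟩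
    rcases le_or_gt k n with hk | hk
    · have : (GenContFract.of ξ).dens k ≤ (q:ℝ) := hdq ▸ hmono hk
      linarith
    · have : D ≤ (GenContFract.of ξ).dens k := hmono hk
      linarith
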